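/- Let s, t be coprime positive integers, p, q ∈ ℂ with p ≠ 0 and q ≠ 0, and f(z) = z^{s+t} + p z^t + q. Suppose a ∈ ℂ is a double root of f, i.e., f(a) = 0 and f′(a) = 0. Then: (i) |a|^{s+t} = |q|·t/s and |a|^s = |p|·t/(s+t); (ii) |p| = |q|^{s/(s+t)}·((t/s)^{s/(s+t)} + (s/t)^{t/(s+t)}); and (iii) exactly t−1 roots of f, counted with multiplicity, have norm strictly smaller than |a| (so that in the ordering of the roots by nondecreasing norm, the double root occupies positions t and t+1). -/

import Mathlib

open Polynomial

open Polynomial Multiset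

noncomputable def Complex.abs : AbsoluteValue ℂ ℝ := IsAbsoluteValue.toAbsoluteValue (norm : ℂ → ℝ)

theorem Complex.norm_eq_abs (z : ℂ) : ‖z‖ = Complex.abs z := rfl

theorem Complex.abs_ofReal (r : ℝ) : Complex.abs (r : ℂ) = |r| := Complex.norm_real r

theorem Complex.sq_abs (z : ℂ) : Complex.abs z ^ 2 = Complex.normSq z := Complex.sq_norm z

namespace DRP

/-- The normalized trinomial family `X^(s+t) - ((s+t)/t) X^t + c`. -/
noncomputable def G (s t : ℕ) (c : ℝ) : ℂ[X] :=
  X ^ (s + t) - C (((s : ℂ) + t) / t) * X ^ t + C (c : ℂ)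

variable {s t : ℕ}

lemma G_eval (c : ℝ) (z : ℂ) :
    (G s t c).eval z = z ^ (s + t) - ((s : ℂ) + t) / t * z ^ t + c := by
  simp [G]

lemma G_alt (c : ℝ) :
    G s t c = X ^ (s + t) + (-(C (((s : ℂ) + t) / t) * X ^ t) + C (c : ℂ)) := by
  rw [G]; ring

lemma G_tail_degree (hs : 0 < s) (c : ℝ) :
    degree (-(C (((s : ℂ) + t) / t) * X ^ t) + C (c : ℂ)) < degree ((X : ℂ[X]) ^ (s + t)) := by
  rw [degree_X_pow]
  refine lt_of_le_of_lt (degree_add_le _ _) (max_lt ?_ ?_)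
  · rw [degree_neg]
    exact lt_of_le_of_lt (degree_C_mul_X_pow_le _ _)
      (by exact_mod_cast Nat.lt_add_of_pos_left hs)
  · exact lt_of_le_of_lt degree_C_le (by exact_mod_cast Nat.add_pos_left hs t)

lemma G_monic (hs : 0 < s) (ht : 0 < t) (c : ℝ) : (G s t c).Monic := by
  rw [G_alt]
  exact (monic_X_pow _).add_of_left (G_tail_degree hs c)

lemma G_ne_zero (hs : 0 < s) (ht : 0 < t) (c : ℝ) : G s t c ≠ 0 :=
  (G_monic hs ht c).ne_zero

lemma G_natDegree (hs : 0 < s) (ht : 0 < t) (c : ℝ) : (G s t c).natDegree = s + t := by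
  rw [G_alt]
  have := degree_add_eq_left_of_degree_lt (G_tail_degree (t := t) hs c)
  rw [degree_X_pow] at this
  exact natDegree_eq_of_degree_eq_some this

lemma G_card_roots (hs : 0 < s) (ht : 0 < t) (c : ℝ) :
    Multiset.card (G s t c).roots = s + t := by
  rw [splits_iff_card_roots.mp (IsAlgClosed.splits _), G_natDegree hs ht]

lemma G_eq_prod (hs : 0 < s) (ht : 0 < t) (c : ℝ) :
    G s t c = ((G s t c).roots.map fun w => X - C w).prod :=
  (prod_multiset_X_sub_C_of_monic_of_roots_card_eq (G_monic hs ht c)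
    (by rw [G_card_roots hs ht, G_natDegree hs ht])).symm

lemma G_root_bound (hs : 0 < s) (ht : 0 < t) {c : ℝ} {z : ℂ}
    (hz : z ∈ (G s t c).roots) : Complex.abs z ≤ ((s : ℝ) + t) / t + |c| + 1 := by
  have hroot : (G s t c).eval z = 0 := (mem_roots (G_ne_zero hs ht c)).mp hz
  rw [G_eval] at hroot
  set A := Complex.abs z with hA
  have hb : Complex.abs (((s : ℂ) + t) / t) = ((s : ℝ) + t) / t := by
    have h' : (((s : ℂ) + t) / t) = ((((s:ℝ) + t) / t : ℝ) : ℂ) := by push_cast; ring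
    rw [h', Complex.abs_ofReal, abs_of_nonneg (by positivity)]
  have hbnn : (0:ℝ) ≤ ((s : ℝ) + t) / t := by positivity
  by_cases h1 : A ≤ 1
  · nlinarith [abs_nonneg c]
  push_neg at h1
  have hzz : z ^ (s + t) = ((s : ℂ) + t) / t * z ^ t - c := by
    linear_combination hroot
  have e1 : A ^ (s + t) ≤ ((s : ℝ) + t) / t * A ^ t + |c| := by
    have e0 : Complex.abs (z ^ (s+t)) ≤ Complex.abs (((s : ℂ) + t) / t * z ^ t) +
        Complex.abs (-(c:ℂ)) := by
      rw [hzz, sub_eq_add_neg]; exact Complex.abs.add_le _ _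
    rw [map_pow, map_mul, map_pow, hb, AbsoluteValue.map_neg, Complex.abs_ofReal] at e0
    exact e0
  have h2 : (1:ℝ) ≤ A ^ t := one_le_pow₀ h1.le
  have habs : A ^ (s + t) ≤ (((s : ℝ) + t) / t + |c|) * A ^ t := by
    nlinarith [abs_nonneg c]
  have hst : A ^ (s + t) = A ^ s * A ^ t := pow_add _ _ _
  have hzt : (0:ℝ) < A ^ t := by positivity
  have hS : A ^ s ≤ ((s : ℝ) + t) / t + |c| := by
    rw [hst] at habs
    exact le_of_mul_le_mul_right (by linarith) hzt
  have : A ≤ A ^ s := le_self_pow₀ h1.le hs.ne'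
  nlinarith [abs_nonneg c]

lemma card_filter_eq_of_rel {α β : Type*} {r : α → β → Prop} {P : α → Prop} {Q : β → Prop}
    [DecidablePred P] [DecidablePred Q] {m₁ : Multiset α} {m₂ : Multiset β}
    (h : Multiset.Rel r m₁ m₂) (hPQ : ∀ a b, r a b → (P a ↔ Q b)) :
    Multiset.card (m₁.filter P) = Multiset.card (m₂.filter Q) := by
  induction h with
  | zero => simp
  | @cons a b as bs hab hrel ih =>
    rw [Multiset.filter_cons, Multiset.filter_cons, Multiset.card_add, Multiset.card_add, ih]
    congr 1
    by_cases hPa : P a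
    · rw [if_pos hPa, if_pos ((hPQ a b hab).mp hPa)]; simp
    · rw [if_neg hPa, if_neg (fun hQb => hPa ((hPQ a b hab).mpr hQb))]; rfl

lemma eq_pair_of_card_eq_two {α : Type*} {m : Multiset α} {a b : α}
    (hm : Multiset.card m = 2) (hab : a ≠ b) (ham : a ∈ m) (hbm : b ∈ m) :
    m = {a, b} := by
  obtain ⟨m', rfl⟩ := Multiset.exists_cons_of_mem ham
  have hb' : b ∈ m' := by
    rcases Multiset.mem_cons.mp hbm with h | h
    · exact absurd h.symm hab
    · exact h
  obtain ⟨m'', rfl⟩ := Multiset.exists_cons_of_mem hb'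
  have : Multiset.card m'' = 0 := by
    simp only [Multiset.card_cons] at hm; omega
  rw [Multiset.card_eq_zero.mp this]
  rfl

end DRP

open Filter Topology

namespace DRP

lemma coe_ofFn_eq_map {n : ℕ} (f : Fin n → ℂ) :
    ((List.ofFn f : List ℂ) : Multiset ℂ) = Multiset.map f ↑(List.finRange n) := by
  rw [List.ofFn_eq_map]
  simp

lemma G_roots_matching {s t : ℕ} (hs : 0 < s) (ht : 0 < t) (c₀ : ℝ) {ε : ℝ} (hε : 0 < ε) :
    ∀ᶠ c in 𝓝 c₀,
      Multiset.Rel (fun x y => dist x y < ε) (G s t c).roots (G s t c₀).roots := by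
  by_contra hcon
  rw [Filter.not_eventually] at hcon
  have hseq : ∀ k : ℕ, ∃ c : ℝ, |c - c₀| < 1 / (k + 1) ∧
      ¬ Multiset.Rel (fun x y => dist x y < ε) (G s t c).roots (G s t c₀).roots := by
    intro k
    have hball : ∀ᶠ c in 𝓝 c₀, |c - c₀| < 1 / ((k : ℝ) + 1) := by
      filter_upwards [Metric.ball_mem_nhds c₀ (by positivity : (0:ℝ) < 1 / ((k:ℝ)+1))] with c hc
      simpa [Real.dist_eq] using Metric.mem_ball.mp hc
    obtain ⟨c, hc1, hc2⟩ := (hcon.and_eventually hball).exists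
    exact ⟨c, hc2, hc1⟩
  choose u hu1 hu2 using hseq
  have htend : Tendsto u atTop (𝓝 c₀) := by
    rw [tendsto_iff_dist_tendsto_zero]
    refine tendsto_of_tendsto_of_tendsto_of_le_of_le tendsto_const_nhds
      tendsto_one_div_add_atTop_nhds_zero_nat (fun k => dist_nonneg) (fun k => ?_)
    rw [Real.dist_eq]
    exact (hu1 k).le
  set n := s + t with hn
  have hlen : ∀ k, ((G s t (u k)).roots.toList.length) = n := fun k => by
    rw [Multiset.length_toList, G_card_roots hs ht]
  set v : ℕ → (Fin n → ℂ) := fun k i =>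
    (G s t (u k)).roots.toList.get ⟨i, by rw [hlen]; exact i.isLt⟩ with hv
  have hofFn : ∀ k, (G s t (u k)).roots.toList = List.ofFn (v k) := by
    intro k
    refine List.ext_get (by simp [hlen]) (fun i h1 h2 => ?_)
    simp [hv]
  have hvmem : ∀ k i, v k i ∈ (G s t (u k)).roots := fun k i =>
    Multiset.mem_toList.mp (List.get_mem _ _)
  set R : ℝ := ((s : ℝ) + t) / t + (|c₀| + 1) + 1 with hR
  have hballmem : ∀ k, v k ∈ Set.univ.pi fun _ : Fin n => Metric.closedBall (0 : ℂ) R := by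
    intro k
    refine Set.mem_univ_pi.mpr fun i => ?_
    rw [Metric.mem_closedBall, dist_zero_right, Complex.norm_eq_abs]
    have h1 : Complex.abs (v k i) ≤ ((s : ℝ) + t) / t + |u k| + 1 :=
      G_root_bound hs ht (hvmem k i)
    have h2 : |u k| ≤ |c₀| + 1 := by
      have h3 : 1 / ((k : ℝ) + 1) ≤ 1 := by
        rw [div_le_one (by positivity)]; linarith [Nat.cast_nonneg (α := ℝ) k]
      have := hu1 k
      have h4 : |u k| - |c₀| ≤ |u k - c₀| := abs_sub_abs_le_abs_sub _ _
      linarith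
    rw [hR]
    linarith
  have hcompact : IsCompact (Set.univ.pi fun _ : Fin n => Metric.closedBall (0 : ℂ) R) :=
    isCompact_univ_pi fun _ => isCompact_closedBall _ _
  obtain ⟨ρ, hρmem, φ, hφ, hvφ⟩ := hcompact.tendsto_subseq hballmem
  have hcomp : ∀ i, Tendsto (fun k => v (φ k) i) atTop (𝓝 (ρ i)) := by
    intro i
    exact (tendsto_pi_nhds.mp hvφ) i
  have heval : ∀ k (z : ℂ), (G s t (u k)).eval z = ∏ i : Fin n, (z - v k i) := by
    intro k z
    conv_lhs => rw [G_eq_prod hs ht (u k)]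
    rw [eval_multiset_prod, ← Multiset.coe_toList (G s t (u k)).roots, hofFn k]
    rw [Multiset.map_coe, Multiset.map_coe, Multiset.prod_coe]
    rw [List.map_ofFn, List.map_ofFn, List.prod_ofFn]
    simp [Function.comp]
  have hlim : ∀ z : ℂ, (G s t c₀).eval z = ∏ i : Fin n, (z - ρ i) := by
    intro z
    have hev : ∀ c : ℝ, (G s t c).eval z = (G s t c₀).eval z + ((c : ℂ) - (c₀ : ℂ)) := by
      intro c; rw [G_eval, G_eval]; ring
    have htend2 : Tendsto (fun k => u (φ k)) atTop (𝓝 c₀) := htend.comp hφ.tendsto_atTop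
    have htend3 : Tendsto (fun k => ((u (φ k) : ℝ) : ℂ)) atTop (𝓝 ((c₀ : ℝ) : ℂ)) :=
      (Complex.continuous_ofReal.tendsto _).comp htend2
    have h1 : Tendsto (fun k => (G s t (u (φ k))).eval z) atTop (𝓝 ((G s t c₀).eval z)) := by
      have h0 : Tendsto (fun k => (G s t c₀).eval z + (((u (φ k) : ℝ) : ℂ) - (c₀ : ℂ)))
          atTop (𝓝 ((G s t c₀).eval z + (((c₀ : ℝ) : ℂ) - (c₀ : ℂ)))) :=
        tendsto_const_nhds.add (htend3.sub tendsto_const_nhds)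
      rw [sub_self, add_zero] at h0
      have hfe : (fun k => (G s t (u (φ k))).eval z)
          = fun k => (G s t c₀).eval z + (((u (φ k) : ℝ) : ℂ) - (c₀ : ℂ)) :=
        funext fun k => hev (u (φ k))
      rw [hfe]
      exact h0
    have h2 : Tendsto (fun k => ∏ i : Fin n, (z - v (φ k) i)) atTop
        (𝓝 (∏ i : Fin n, (z - ρ i))) :=
      tendsto_finset_prod _ fun i _ => tendsto_const_nhds.sub (hcomp i)
    have h1' : Tendsto (fun k => ∏ i : Fin n, (z - v (φ k) i)) atTop
        (𝓝 ((G s t c₀).eval z)) := by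
      simpa only [heval] using h1
    exact tendsto_nhds_unique h1' h2
  have hroots₀ : (G s t c₀).roots = Multiset.map ρ ↑(List.finRange n) := by
    have hGprod : G s t c₀ =
        ((Multiset.map ρ ↑(List.finRange n)).map fun w => X - C w).prod := by
      apply Polynomial.funext
      intro z
      rw [hlim z, eval_multiset_prod, ← coe_ofFn_eq_map]
      rw [Multiset.map_coe, Multiset.map_coe, Multiset.prod_coe]
      rw [List.map_ofFn, List.map_ofFn, List.prod_ofFn]
      simp [Function.comp]
    rw [hGprod, roots_multiset_prod_X_sub_C]
  have hevk : ∀ᶠ k in atTop, ∀ i, dist (v (φ k) i) (ρ i) < ε := by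
    rw [eventually_all]
    intro i
    exact Metric.tendsto_nhds.mp (hcomp i) ε hε
  obtain ⟨k, hk⟩ := hevk.exists
  apply hu2 (φ k)
  have hroots_k : (G s t (u (φ k))).roots = Multiset.map (v (φ k)) ↑(List.finRange n) := by
    rw [← Multiset.coe_toList (G s t (u (φ k))).roots, hofFn (φ k), coe_ofFn_eq_map]
  rw [hroots_k, hroots₀, Multiset.rel_map]
  exact Multiset.rel_refl_of_refl_on fun i _ => hk i

end DRP

namespace DRP

variable {s t : ℕ}

-- real trinomial lower bound: for x ≥ 0, x ≠ 1, ψ x > ψ 1 where ψ x = x^(s+t) - b x^t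
lemma psi_lower (hs : 0 < s) (ht : 0 < t) {x : ℝ} (hx : 0 ≤ x) (hx1 : x ≠ 1) :
    1 - ((s : ℝ) + t) / t < x ^ (s + t) - ((s : ℝ) + t) / t * x ^ t := by
  obtain ⟨t', rfl⟩ : ∃ t', t = t' + 1 := ⟨t - 1, by omega⟩
  set b : ℝ := ((s : ℝ) + (t' + 1)) / (t' + 1) with hb
  set ψ : ℝ → ℝ := fun x => x ^ (s + (t' + 1)) - b * x ^ (t' + 1) with hψ
  have hder : ∀ y : ℝ, HasDerivAt ψ
      (((s + (t' + 1) : ℕ) : ℝ) * y ^ (s + t') - b * (((t' + 1 : ℕ) : ℝ) * y ^ t')) y := by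
    intro y
    have h1 := hasDerivAt_pow (s + (t' + 1)) y
    have h2 := (hasDerivAt_pow (t' + 1) y).const_mul b
    have h3 := h1.sub h2
    have h4 : ψ = (fun x => x ^ (s + (t' + 1))) - fun y => b * y ^ (t' + 1) := rfl
    rw [h4]
    simpa using h3
  have hbt : b * ((t' + 1 : ℕ) : ℝ) = (s : ℝ) + (t' + 1) := by
    rw [hb]; push_cast; field_simp
  have hcont : Continuous ψ := by fun_prop
  have hmono : StrictMonoOn ψ (Set.Ici 1) := by
    refine strictMonoOn_of_deriv_pos (convex_Ici 1) hcont.continuousOn ?_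
    intro y hy
    rw [interior_Ici] at hy
    rw [(hder y).deriv]
    have hy1 : (1 : ℝ) < y := hy
    have hys : 1 < y ^ s := one_lt_pow₀ hy1 hs.ne'
    have hyt : 0 < y ^ t' := by positivity
    have key : ((s + (t' + 1) : ℕ) : ℝ) * y ^ (s + t') - b * (((t' + 1 : ℕ) : ℝ) * y ^ t')
        = ((s : ℝ) + (t' + 1)) * y ^ t' * (y ^ s - 1) := by
      rw [← mul_assoc, hbt]; push_cast; rw [pow_add]; ring
    rw [key]
    exact mul_pos (mul_pos (by positivity) hyt) (sub_pos.mpr hys)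
  have hanti : StrictAntiOn ψ (Set.Icc 0 1) := by
    refine strictAntiOn_of_deriv_neg (convex_Icc 0 1) hcont.continuousOn ?_
    intro y hy
    rw [interior_Icc] at hy
    rw [(hder y).deriv]
    have hy0 : (0:ℝ) < y := hy.1
    have hy1 : y < 1 := hy.2
    have hys : y ^ s < 1 := pow_lt_one₀ hy0.le hy1 hs.ne'
    have hyt : 0 < y ^ t' := by positivity
    have key : ((s + (t' + 1) : ℕ) : ℝ) * y ^ (s + t') - b * (((t' + 1 : ℕ) : ℝ) * y ^ t')
        = ((s : ℝ) + (t' + 1)) * y ^ t' * (y ^ s - 1) := by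
      rw [← mul_assoc, hbt]; push_cast; rw [pow_add]; ring
    rw [key]
    exact mul_neg_of_pos_of_neg (mul_pos (by positivity) hyt) (sub_neg.mpr hys)
  have hψ1 : ψ 1 = 1 - b := by simp [hψ]
  have key2 : 1 - b < ψ x := by
    rcases lt_or_gt_of_ne hx1 with h | h
    · have := hanti ⟨hx, h.le⟩ ⟨zero_le_one, le_refl 1⟩ h
      rw [hψ1] at this
      exact this
    · have := hmono (Set.mem_Ici.mpr (le_refl 1)) (Set.mem_Ici.mpr h.le) h
      rw [hψ1] at this
      exact this
  rw [hψ] at key2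
  simp only [hb] at key2
  push_cast at key2 ⊢
  linarith

lemma Fstar_pos (hs : 0 < s) (ht : 0 < t) {x : ℝ} (hx : 0 ≤ x) (hx1 : x ≠ 1) :
    0 < x ^ (s + t) - ((s : ℝ) + t) / t * x ^ t + (s : ℝ) / t := by
  have h := psi_lower hs ht hx hx1
  have htR : (0:ℝ) < t := by exact_mod_cast ht
  have : 1 - ((s : ℝ) + t) / t + (s : ℝ)/t = 0 := by field_simp; ring
  linarith

-- real root gives complex root of G
lemma real_root_mem (hs : 0 < s) (ht : 0 < t) {c x : ℝ}
    (hx : x ^ (s + t) - ((s : ℝ) + t) / t * x ^ t + c = 0) :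
    (x : ℂ) ∈ (G s t c).roots := by
  rw [mem_roots (G_ne_zero hs ht c), IsRoot.def, G_eval]
  have : ((x : ℂ) ^ (s + t) - ((s : ℂ) + t) / t * (x : ℂ) ^ t + (c : ℂ))
      = ((x ^ (s + t) - ((s : ℝ) + t) / t * x ^ t + c : ℝ) : ℂ) := by
    push_cast; ring
  rw [this, hx, Complex.ofReal_zero]

-- no roots on the unit circle for 0 ≤ c < s/t
lemma no_circle_root (hs : 0 < s) (ht : 0 < t) {c : ℝ} (hc0 : 0 ≤ c) (hc1 : c < (s:ℝ)/t)
    {z : ℂ} (hz : Complex.abs z = 1) : (G s t c).eval z ≠ 0 := by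
  intro h
  rw [G_eval] at h
  have hcz : (c : ℂ) = z ^ t * (((s : ℂ) + t) / t - z ^ s) := by
    have hpow : z ^ (s+t) = z ^ s * z ^ t := pow_add z s t
    linear_combination h - hpow
  have habs : c = Complex.abs (((s : ℂ) + t) / t - z ^ s) := by
    have := congrArg Complex.abs hcz
    rwa [Complex.abs_ofReal, abs_of_nonneg hc0, map_mul, map_pow, hz, one_pow, one_mul] at this
  have hB : Complex.abs (((s : ℂ) + t) / t) = ((s : ℝ) + t) / t := by
    have h' : (((s : ℂ) + t) / t) = ((((s:ℝ) + t) / t : ℝ) : ℂ) := by push_cast; ring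
    rw [h', Complex.abs_ofReal, abs_of_nonneg (by positivity)]
  have hzs : Complex.abs (z ^ s) = 1 := by rw [map_pow, hz, one_pow]
  have hge : ((s : ℝ) + t) / t - 1 ≤ Complex.abs (((s : ℂ) + t) / t - z ^ s) := by
    have h0 := norm_sub_norm_le (((s : ℂ) + t) / t) (z ^ s)
    simp only [Complex.norm_eq_abs] at h0
    rw [hB, hzs] at h0
    linarith
  have htR : (0:ℝ) < t := by exact_mod_cast ht
  have heq : ((s : ℝ) + t) / t - 1 = (s:ℝ)/t := by field_simp; ring
  linarith [habs, hge]

-- at c = s/t, circle roots are exactly 1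
lemma circle_root_eq_one (hs : 0 < s) (ht : 0 < t) (hst : Nat.Coprime s t)
    {z : ℂ} (hz : Complex.abs z = 1) (h : (G s t ((s:ℝ)/t)).eval z = 0) : z = 1 := by
  have htR : (0:ℝ) < t := by exact_mod_cast ht
  have htC : (t : ℂ) ≠ 0 := by exact_mod_cast (show (t:ℝ) ≠ 0 by positivity)
  rw [G_eval] at h
  set b : ℝ := ((s : ℝ) + t) / t with hb
  have hBb : ((s : ℂ) + t) / t = ((b : ℝ) : ℂ) := by rw [hb]; push_cast; ring
  have hb1 : 1 < b := by
    rw [hb, lt_div_iff₀ htR]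
    have : (0:ℝ) < s := by exact_mod_cast hs
    linarith
  have hcz : (((s:ℝ)/t : ℝ) : ℂ) = z ^ t * (((b:ℝ):ℂ) - z ^ s) := by
    have hpow : z ^ (s+t) = z ^ s * z ^ t := pow_add z s t
    linear_combination h - hpow + z ^ t * hBb
  have habs : (s:ℝ)/t = Complex.abs (((b:ℝ):ℂ) - z ^ s) := by
    have := congrArg Complex.abs hcz
    rwa [Complex.abs_ofReal, abs_of_nonneg (by positivity), map_mul, map_pow, hz,
      one_pow, one_mul] at this
  set u : ℂ := z ^ s with hu
  have huabs : Complex.abs u = 1 := by rw [hu, map_pow, hz, one_pow]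
  have hnormsq : u.re ^ 2 + u.im ^ 2 = 1 := by
    have h1 : Complex.abs u ^ 2 = u.re ^ 2 + u.im ^ 2 := by
      rw [Complex.sq_abs, Complex.normSq_apply]; ring
    rw [huabs] at h1; linarith [h1]
  have habs2 : (b - u.re) ^ 2 + u.im ^ 2 = ((s:ℝ)/t) ^ 2 := by
    have h1 : Complex.abs (((b:ℝ):ℂ) - u) ^ 2 = (b - u.re) ^ 2 + u.im ^ 2 := by
      rw [Complex.sq_abs, Complex.normSq_apply]
      simp [Complex.sub_re, Complex.sub_im, Complex.ofReal_re, Complex.ofReal_im]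
      ring
    rw [← habs] at h1
    linarith [h1]
  have hbst : b - 1 = (s:ℝ)/t := by rw [hb]; field_simp; ring
  have hure : u.re = 1 := by nlinarith [hbst]
  have huim : u.im = 0 := by nlinarith
  have hu1 : u = 1 := Complex.ext (by rw [hure]; rfl) (by rw [huim]; rfl)
  -- now z^s = 1; derive z^t = 1
  have hzs1 : z ^ s = 1 := by rw [← hu]; exact hu1
  have hzt : z ^ t = 1 := by
    have h2 : z ^ (s + t) = z ^ t := by rw [pow_add, hzs1, one_mul]
    have hc' : (((s:ℝ)/t : ℝ) : ℂ) = (s:ℂ)/t := by push_cast; ring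
    have hBt : ((s : ℂ) + t) / t = 1 + (s:ℂ)/t := by field_simp; ring
    have h5 : ((s:ℂ)/t) * z ^ t = ((s:ℂ)/t) * 1 := by
      rw [mul_one]
      linear_combination -h + h2 + hc' - z ^ t * hBt
    have h6 : ((s:ℂ)/t) ≠ 0 := by
      apply div_ne_zero _ htC
      exact_mod_cast (show (s:ℝ) ≠ 0 by positivity)
    exact mul_left_cancel₀ h6 h5
  -- coprimality
  have hzne : z ≠ 0 := by
    intro h0; rw [h0] at hz; simp at hz
  have hgcd := Nat.gcd_eq_gcd_ab s t
  rw [hst] at hgcd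
  have hzs' : z ^ (s:ℤ) = 1 := by rw [zpow_natCast]; exact hzs1
  have hzt' : z ^ (t:ℤ) = 1 := by rw [zpow_natCast]; exact hzt
  calc z = z ^ (1:ℤ) := (zpow_one z).symm
  _ = z ^ ((s:ℤ) * Nat.gcdA s t + (t:ℤ) * Nat.gcdB s t) := by rw [← hgcd]; norm_num
  _ = (z ^ (s:ℤ)) ^ Nat.gcdA s t * (z ^ (t:ℤ)) ^ Nat.gcdB s t := by
      rw [zpow_add₀ hzne, zpow_mul, zpow_mul]
  _ = 1 := by rw [hzs', hzt', one_zpow, one_zpow, one_mul]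

end DRP

namespace DRP
variable {s t : ℕ}

lemma card_filter_eq_of_rel' {α β : Type*} {r : α → β → Prop} {P : α → Prop} {Q : β → Prop}
    [DecidablePred P] [DecidablePred Q] {m₁ : Multiset α} {m₂ : Multiset β}
    (h : Multiset.Rel r m₁ m₂) :
    (∀ a b, a ∈ m₁ → b ∈ m₂ → r a b → (P a ↔ Q b)) →
      Multiset.card (m₁.filter P) = Multiset.card (m₂.filter Q) := by
  induction h with
  | zero => intro _; simp
  | @cons a b as bs hab hrel ih =>
    intro hPQ
    rw [Multiset.filter_cons, Multiset.filter_cons, Multiset.card_add, Multiset.card_add,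
      ih fun x y hx hy hr =>
        hPQ x y (Multiset.mem_cons_of_mem hx) (Multiset.mem_cons_of_mem hy) hr]
    congr 1
    have hiff := hPQ a b (Multiset.mem_cons_self a as) (Multiset.mem_cons_self b bs) hab
    by_cases hPa : P a
    · rw [if_pos hPa, if_pos (hiff.mp hPa)]; simp
    · rw [if_neg hPa, if_neg (fun hQb => hPa (hiff.mpr hQb))]; rfl

lemma exists_pos_le {F : Finset ℂ} {m : ℂ → ℝ} (hm : ∀ w ∈ F, 0 < m w) :
    ∃ δ : ℝ, 0 < δ ∧ ∀ w ∈ F, δ ≤ m w := by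
  rcases F.eq_empty_or_nonempty with h | h
  · exact ⟨1, one_pos, by simp [h]⟩
  · exact ⟨F.inf' h m, (Finset.lt_inf'_iff h).mpr (fun b hb => hm b hb),
      fun w hw => Finset.inf'_le m hw⟩

-- margin at interior parameters
lemma margin_interior (hs : 0 < s) (ht : 0 < t) {c : ℝ} (h0 : 0 ≤ c) (h1 : c < (s:ℝ)/t) :
    ∃ δ : ℝ, 0 < δ ∧ ∀ w ∈ (G s t c).roots, δ ≤ |Complex.abs w - 1| := by
  obtain ⟨δ, hδ, hle⟩ := exists_pos_le (F := (G s t c).roots.toFinset)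
    (m := fun w => |Complex.abs w - 1|) (fun w hw => by
      rw [abs_pos, sub_ne_zero]
      intro habs
      exact no_circle_root hs ht h0 h1 habs
        ((mem_roots (G_ne_zero hs ht c)).mp (Multiset.mem_toFinset.mp hw)))
  exact ⟨δ, hδ, fun w hw => hle w (Multiset.mem_toFinset.mpr hw)⟩

-- margin at the critical parameter
lemma margin_cstar (hs : 0 < s) (ht : 0 < t) (hst : Nat.Coprime s t) :
    ∃ δ : ℝ, 0 < δ ∧ ∀ w ∈ (G s t ((s:ℝ)/t)).roots, w ≠ 1 →
      δ ≤ Complex.abs (w - 1) ∧ δ ≤ |Complex.abs w - 1| := by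
  obtain ⟨δ, hδ, hle⟩ := exists_pos_le (F := ((G s t ((s:ℝ)/t)).roots.toFinset).erase 1)
    (m := fun w => min (Complex.abs (w - 1)) (|Complex.abs w - 1|)) (fun w hw => by
      have hw1 : w ≠ 1 := Finset.ne_of_mem_erase hw
      have hwr : (G s t ((s:ℝ)/t)).eval w = 0 :=
        (mem_roots (G_ne_zero hs ht _)).mp
          (Multiset.mem_toFinset.mp (Finset.mem_of_mem_erase hw))
      refine lt_min ?_ ?_
      · exact Complex.abs.pos (sub_ne_zero.mpr hw1)
      · rw [abs_pos, sub_ne_zero]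
        intro habs
        exact hw1 (circle_root_eq_one hs ht hst habs hwr))
  refine ⟨δ, hδ, fun w hw hw1 => ?_⟩
  have := hle w (Finset.mem_erase.mpr ⟨hw1, Multiset.mem_toFinset.mpr hw⟩)
  exact ⟨this.trans (min_le_left _ _), this.trans (min_le_right _ _)⟩

-- root multiplicity of 1 at the critical parameter is 2
lemma rootMult_one (hs : 0 < s) (ht : 0 < t) :
    rootMultiplicity 1 (G s t ((s:ℝ)/t)) = 2 := by
  have htR : (0:ℝ) < t := by exact_mod_cast ht
  have htC : (t : ℂ) ≠ 0 := by exact_mod_cast (show (t:ℝ) ≠ 0 by positivity)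
  set g := G s t ((s:ℝ)/t) with hg
  have hgne : g ≠ 0 := G_ne_zero hs ht _
  have h0 : g.eval 1 = 0 := by
    rw [hg, G_eval]
    push_cast
    field_simp
    ring
  have hD1 : derivative g
      = C ((s:ℂ) + t) * X ^ (s + t - 1) - C ((s:ℂ) + t) * X ^ (t - 1) := by
    have hBt : C ((((s:ℂ)+t)/t)) * C ((t:ℕ) : ℂ) = C ((s:ℂ)+t) := by
      rw [← C_mul]; congr 1; push_cast; field_simp
    have hcast : (((s+t : ℕ)) : ℂ) = (s:ℂ) + t := by push_cast; ring
    rw [hg, G, derivative_add, derivative_sub, derivative_X_pow, derivative_C, add_zero,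
      derivative_C_mul, derivative_X_pow, ← mul_assoc, hBt, hcast]
  have hd : (derivative g).eval 1 = 0 := by
    rw [hD1]
    simp
  have hD2 : (derivative (derivative g)).eval 1 = ((s:ℂ) + t) * s := by
    rw [hD1, derivative_sub, derivative_C_mul, derivative_C_mul, derivative_X_pow,
      derivative_X_pow]
    simp only [eval_sub, eval_mul, eval_C, eval_pow, eval_X, one_pow, mul_one]
    rw [Nat.cast_sub (by omega : 1 ≤ s + t), Nat.cast_sub (by omega : 1 ≤ t)]
    push_cast
    ring
  have hD2ne : (derivative (derivative g)).eval 1 ≠ 0 := by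
    rw [hD2]
    refine mul_ne_zero ?_ ?_
    · have : ((s:ℂ) + t) = ((s + t : ℕ) : ℂ) := by push_cast; ring
      rw [this]
      exact Nat.cast_ne_zero.mpr (by omega)
    · exact Nat.cast_ne_zero.mpr hs.ne'
  have hge : 1 < rootMultiplicity 1 g := by
    refine lt_rootMultiplicity_of_isRoot_iterate_derivative_of_mem_nonZeroDivisors hgne
      (fun m hm => ?_) ?_
    · interval_cases m
      · simpa [IsRoot] using h0
      · simpa [IsRoot] using hd
    · simp only [Nat.factorial_one, Nat.cast_one]
      exact Submonoid.one_mem _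
  have hlt : ¬ 2 < rootMultiplicity 1 g := by
    intro hgt
    have := isRoot_iterate_derivative_of_lt_rootMultiplicity hgt
    rw [show derivative^[2] g = derivative (derivative g) by rfl] at this
    exact hD2ne this
  omega

-- count of roots inside the open unit disc
noncomputable def N (s t : ℕ) (c : ℝ) : ℕ :=
  Multiset.card ((G s t c).roots.filter (fun z => Complex.abs z < 1))

lemma N_zero (hs : 0 < s) (ht : 0 < t) : N s t 0 = t := by
  classical
  have htC : (t : ℂ) ≠ 0 := by
    exact_mod_cast Nat.cast_ne_zero.mpr ht.ne'
  set B : ℂ := ((s:ℂ) + t) / t with hB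
  have hBabs : 1 < Complex.abs B := by
    have h' : B = ((((s:ℝ) + t) / t : ℝ) : ℂ) := by rw [hB]; push_cast; ring
    rw [h', Complex.abs_ofReal, abs_of_nonneg (by positivity)]
    rw [lt_div_iff₀ (by exact_mod_cast ht)]
    have : (0:ℝ) < s := by exact_mod_cast hs
    linarith
  have hfact : G s t 0 = X ^ t * (X ^ s - C B) := by
    rw [G, hB]
    simp only [Complex.ofReal_zero, C_0, add_zero]
    ring
  have hmem : ∀ z ∈ (G s t 0).roots, (Complex.abs z < 1 ↔ z = 0) := by
    intro z hz
    have hzr : (G s t 0).eval z = 0 := (mem_roots (G_ne_zero hs ht 0)).mp hz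
    rw [hfact] at hzr
    simp only [eval_mul, eval_sub, eval_pow, eval_X, eval_C, mul_eq_zero] at hzr
    constructor
    · intro habs
      rcases hzr with h | h
      · exact pow_eq_zero_iff ht.ne' |>.mp h
      · exfalso
        have : z ^ s = B := by linear_combination h
        have h2 : Complex.abs z ^ s = Complex.abs B := by rw [← map_pow, this]
        have h3 : Complex.abs z ^ s ≤ 1 := pow_le_one₀ (Complex.abs.nonneg z) habs.le
        linarith
    · intro h; rw [h]; simp
  rw [N, Multiset.filter_congr hmem, Multiset.filter_eq', Multiset.card_replicate,
    count_roots, hfact]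
  have hne : (X ^ t * (X ^ s - C B) : ℂ[X]) ≠ 0 := by rw [← hfact]; exact G_ne_zero hs ht 0
  rw [rootMultiplicity_mul hne]
  have h1 : rootMultiplicity (0:ℂ) (X ^ t) = t := by
    have := rootMultiplicity_X_sub_C_pow (0:ℂ) t
    rwa [C_0, sub_zero] at this
  have h2 : rootMultiplicity (0:ℂ) (X ^ s - C B) = 0 := by
    apply rootMultiplicity_eq_zero
    simp only [IsRoot, eval_sub, eval_pow, eval_X, eval_C, zero_pow hs.ne', zero_sub,
      neg_eq_zero]
    intro h
    rw [h] at hBabs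
    norm_num at hBabs
  rw [h1, h2]
  omega

lemma N_eventually_const (hs : 0 < s) (ht : 0 < t) {c : ℝ} (h0 : 0 ≤ c)
    (h1 : c < (s:ℝ)/t) : ∀ᶠ x in 𝓝 c, N s t x = N s t c := by
  classical
  obtain ⟨δ, hδ, hmargin⟩ := margin_interior hs ht h0 h1
  filter_upwards [G_roots_matching hs ht c hδ] with x hrel
  refine card_filter_eq_of_rel' hrel (fun a b ha hb hab => ?_)
  have hm := hmargin b hb
  have habs : |Complex.abs a - Complex.abs b| ≤ Complex.abs (a - b) :=
    Complex.abs.abs_abv_sub_le_abv_sub a b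
  rw [Complex.dist_eq, Complex.norm_eq_abs] at hab
  constructor
  · intro haP
    by_contra hbQ
    push_neg at hbQ
    have : 1 - Complex.abs b ≤ 0 := by linarith
    rw [abs_sub_comm] at hm
    have : δ ≤ Complex.abs b - 1 := by
      rcases abs_cases (Complex.abs b - 1) with ⟨he, _⟩ | ⟨he, hneg⟩
      · rw [abs_sub_comm] at hm; rw [he] at hm; exact hm
      · linarith [hm, abs_nonneg (Complex.abs b - 1)]
    have := abs_le.mp (le_of_eq (rfl : |Complex.abs a - Complex.abs b| = _))
    rcases abs_cases (Complex.abs a - Complex.abs b) with ⟨he, _⟩ | ⟨he, _⟩ <;> linarith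
  · intro hbQ
    have : δ ≤ 1 - Complex.abs b := by
      rcases abs_cases (Complex.abs b - 1) with ⟨he, hpos⟩ | ⟨he, _⟩
      · linarith [hm, he.symm.le]
      · rw [abs_sub_comm] at hm
        rcases abs_cases (1 - Complex.abs b) with ⟨he2, _⟩ | ⟨he2, _⟩ <;> linarith
    rcases abs_cases (Complex.abs a - Complex.abs b) with ⟨he, _⟩ | ⟨he, _⟩ <;> linarith

lemma eq_of_locally_const {F : ℝ → ℕ} {c₁ : ℝ} (h0 : 0 ≤ c₁)
    (hl : ∀ c ∈ Set.Icc (0:ℝ) c₁, ∀ᶠ x in 𝓝 c, F x = F c) : F c₁ = F 0 := by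
  rcases eq_or_lt_of_le h0 with hc | hc1
  · rw [← hc]
  set S := {c | c ∈ Set.Icc (0:ℝ) c₁ ∧ F c = F 0} with hS
  have h0S : (0:ℝ) ∈ S := ⟨⟨le_refl 0, h0⟩, rfl⟩
  have hSne : S.Nonempty := ⟨0, h0S⟩
  have hbdd : BddAbove S := ⟨c₁, fun x hx => hx.1.2⟩
  set m := sSup S with hm
  have hm0 : 0 ≤ m := le_csSup hbdd h0S
  have hmc : m ≤ c₁ := csSup_le hSne (fun x hx => hx.1.2)
  obtain ⟨η, hη, hball⟩ := Metric.eventually_nhds_iff.mp (hl m ⟨hm0, hmc⟩)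
  have hFm : F m = F 0 := by
    obtain ⟨x, hxS, hx⟩ := exists_lt_of_lt_csSup hSne
      (show m - η < sSup S by rw [← hm]; linarith)
    have hxm : x ≤ m := le_csSup hbdd hxS
    have : dist x m < η := by
      rw [Real.dist_eq, abs_of_nonpos (by linarith)]
      linarith
    rw [← hball this]
    exact hxS.2
  rcases eq_or_lt_of_le hmc with he | hlt
  · rw [← he]; exact hFm
  · exfalso
    set y := min (m + η/2) c₁ with hy
    have hym : m < y := lt_min (by linarith) hlt
    have hyc : y ≤ c₁ := min_le_right _ _
    have hdist : dist y m < η := by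
      rw [Real.dist_eq, abs_of_nonneg (by linarith)]
      have : y ≤ m + η/2 := min_le_left _ _
      linarith
    have hyS : y ∈ S := ⟨⟨by linarith, hyc⟩, by rw [hball hdist]; exact hFm⟩
    have : y ≤ m := le_csSup hbdd hyS
    linarith

lemma N_const (hs : 0 < s) (ht : 0 < t) {c : ℝ} (h0 : 0 ≤ c) (h1 : c < (s:ℝ)/t) :
    N s t c = t := by
  have h2 : N s t c = N s t 0 :=
    eq_of_locally_const h0 (fun x hx => N_eventually_const hs ht hx.1 (lt_of_le_of_lt hx.2 h1))
  rw [h2, N_zero hs ht]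

end DRP

namespace DRP
variable {s t : ℕ}

lemma count_inside_cstar (hs : 0 < s) (ht : 0 < t) (hst : Nat.Coprime s t) :
    Multiset.card ((G s t ((s:ℝ)/t)).roots.filter (fun z => Complex.abs z < 1)) + 1 = t := by
  have htR : (0:ℝ) < t := by exact_mod_cast ht
  have hsR : (0:ℝ) < s := by exact_mod_cast hs
  set c' : ℝ := (s:ℝ)/t with hc'def
  have hc'pos : 0 < c' := by positivity
  obtain ⟨δ, hδ, hmargin⟩ := margin_cstar hs ht hst
  rw [← hc'def] at hmargin
  set ε : ℝ := min (δ/4) (1/2) with hεdef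
  have hεpos : 0 < ε := lt_min (by linarith) (by norm_num)
  have hεδ : ε ≤ δ/4 := min_le_left _ _
  have hεhalf : ε ≤ 1/2 := min_le_right _ _
  -- positive values of the critical trinomial at 1 ∓ ε/2
  have hd₁ : 0 < (1 - ε/2)^(s+t) - ((s:ℝ)+t)/t * (1-ε/2)^t + c' :=
    Fstar_pos hs ht (by linarith) (by intro h; linarith [h])
  have hd₂ : 0 < (1 + ε/2)^(s+t) - ((s:ℝ)+t)/t * (1+ε/2)^t + c' :=
    Fstar_pos hs ht (by linarith) (by intro h; linarith [h])
  set d₁ : ℝ := (1 - ε/2)^(s+t) - ((s:ℝ)+t)/t * (1-ε/2)^t + c' with hd₁def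
  set d₂ : ℝ := (1 + ε/2)^(s+t) - ((s:ℝ)+t)/t * (1+ε/2)^t + c' with hd₂def
  obtain ⟨η, hη, hball⟩ := Metric.eventually_nhds_iff.mp (G_roots_matching hs ht c' hεpos)
  set β : ℝ := min (η/2) (min (d₁/2) (min (d₂/2) (c'/2))) with hβdef
  have hβpos : 0 < β :=
    lt_min (half_pos hη) (lt_min (half_pos hd₁) (lt_min (half_pos hd₂) (half_pos hc'pos)))
  have hβη : β < η := (min_le_left _ _).trans_lt (half_lt_self hη)
  have hβd₁ : β < d₁ := ((min_le_right _ _).trans (min_le_left _ _)).trans_lt (half_lt_self hd₁)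
  have hβd₂ : β < d₂ :=
    ((min_le_right _ _).trans ((min_le_right _ _).trans (min_le_left _ _))).trans_lt
      (half_lt_self hd₂)
  have hβc' : β ≤ c'/2 := (min_le_right _ _).trans ((min_le_right _ _).trans (min_le_right _ _))
  set c : ℝ := c' - β with hcdef
  clear_value ε d₁ d₂ β
  have hc0 : 0 ≤ c := by rw [hcdef]; linarith [hc'pos, hβc', hβpos]
  have hclt : c < c' := by rw [hcdef]; linarith
  have hrel : Multiset.Rel (fun x y => dist x y < ε) (G s t c).roots
      (G s t c').roots := by
    apply hball
    rw [Real.dist_eq, hcdef]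
    rw [abs_of_nonpos (by linarith)]
    linarith
  -- IVT: two real roots of G c near 1
  set f : ℝ → ℝ := fun x => x^(s+t) - ((s:ℝ)+t)/t * x^t + c with hfdef
  have hfcont : Continuous f := by rw [hfdef]; fun_prop
  have hf1 : f 1 = -β := by
    simp only [hfdef, one_pow, mul_one]
    rw [hcdef, hc'def]
    field_simp
    ring
  have hfx₁ : f (1 - ε/2) = d₁ - β := by simp only [hfdef]; rw [hd₁def, hcdef]; ring
  have hfx₂ : f (1 + ε/2) = d₂ - β := by simp only [hfdef]; rw [hd₂def, hcdef]; ring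
  obtain ⟨xm, hxmmem, hxmroot⟩ : ∃ x ∈ Set.Ioo (1 - ε/2) 1, f x = 0 := by
    have hsub := intermediate_value_Ioo' (by linarith : 1 - ε/2 ≤ 1) hfcont.continuousOn
    have h0mem : (0:ℝ) ∈ Set.Ioo (f 1) (f (1 - ε/2)) := by
      rw [hf1, hfx₁]; exact ⟨by linarith, by linarith⟩
    obtain ⟨x, hx, hfx⟩ := hsub h0mem
    exact ⟨x, hx, hfx⟩
  obtain ⟨xp, hxpmem, hxproot⟩ : ∃ x ∈ Set.Ioo 1 (1 + ε/2), f x = 0 := by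
    have hsub := intermediate_value_Ioo (by linarith : (1:ℝ) ≤ 1 + ε/2) hfcont.continuousOn
    have h0mem : (0:ℝ) ∈ Set.Ioo (f 1) (f (1 + ε/2)) := by
      rw [hf1, hfx₂]; exact ⟨by linarith, by linarith⟩
    obtain ⟨x, hx, hfx⟩ := hsub h0mem
    exact ⟨x, hx, hfx⟩
  have hxmc : ((xm : ℝ) : ℂ) ∈ (G s t c).roots := real_root_mem hs ht hxmroot
  have hxpc : ((xp : ℝ) : ℂ) ∈ (G s t c).roots := real_root_mem hs ht hxproot
  have hdistm2 : dist ((xm : ℝ) : ℂ) (1 : ℂ) < ε := by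
    rw [Complex.dist_eq, Complex.norm_eq_abs, show ((xm : ℝ) : ℂ) - 1 = ((xm - 1 : ℝ) : ℂ) by push_cast; ring,
      Complex.abs_ofReal, abs_of_nonpos (by linarith [hxmmem.2])]
    linarith [hxmmem.1]
  have hdistp2 : dist ((xp : ℝ) : ℂ) (1 : ℂ) < ε := by
    rw [Complex.dist_eq, Complex.norm_eq_abs, show ((xp : ℝ) : ℂ) - 1 = ((xp - 1 : ℝ) : ℂ) by push_cast; ring,
      Complex.abs_ofReal, abs_of_nonneg (by linarith [hxpmem.1])]
    linarith [hxpmem.2]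
  -- the two roots of G c near 1
  set m₁ := (G s t c).roots with hm₁
  set m₂ := (G s t c').roots with hm₂
  have hcount1 : Multiset.card (m₁.filter (fun z => dist z 1 < ε))
      = Multiset.card (m₂.filter (fun z => z = 1)) := by
    refine card_filter_eq_of_rel' hrel (fun a b _ hb hab => ?_)
    constructor
    · intro hP
      by_contra hb1
      have hm := (hmargin b hb hb1).1
      have htri : dist b (1:ℂ) ≤ dist b a + dist a 1 := dist_triangle _ _ _
      rw [dist_comm b a] at htri
      have : dist b (1:ℂ) = Complex.abs (b - 1) := Complex.dist_eq _ _
      linarith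
    · intro hb1
      rw [hb1] at hab
      exact hab
  have hcount2 : Multiset.card (m₂.filter (fun z => z = 1)) = 2 := by
    rw [Multiset.filter_eq', Multiset.card_replicate, hm₂, count_roots, hc'def,
      rootMult_one hs ht]
  have hne : ((xm : ℝ) : ℂ) ≠ ((xp : ℝ) : ℂ) := by
    intro h
    have := Complex.ofReal_inj.mp h
    linarith [hxmmem.2, hxpmem.1]
  have hpair : m₁.filter (fun z => dist z 1 < ε) = {((xm:ℝ):ℂ), ((xp:ℝ):ℂ)} := by
    refine eq_pair_of_card_eq_two (by rw [hcount1, hcount2]) hne ?_ ?_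
    · exact Multiset.mem_filter.mpr ⟨hxmc, hdistm2⟩
    · exact Multiset.mem_filter.mpr ⟨hxpc, hdistp2⟩
  -- split the count of roots of G c inside the disc
  have hsplit : Multiset.card (m₁.filter (fun z => Complex.abs z < 1)) =
      Multiset.card ((m₁.filter (fun z => Complex.abs z < 1)).filter (fun z => dist z 1 < ε)) +
      Multiset.card ((m₁.filter (fun z => Complex.abs z < 1)).filter
        (fun z => ¬ dist z 1 < ε)) := by
    rw [← Multiset.card_add, Multiset.filter_add_not]
  have habsm2 : Complex.abs ((xm:ℝ):ℂ) < 1 := by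
    rw [Complex.abs_ofReal, abs_of_nonneg (by linarith [hxmmem.1])]
    exact hxmmem.2
  have habsp2 : ¬ Complex.abs ((xp:ℝ):ℂ) < 1 := by
    rw [Complex.abs_ofReal, abs_of_nonneg (by linarith [hxpmem.1])]
    push_neg
    linarith [hxpmem.1]
  have hterm1 : Multiset.card ((m₁.filter (fun z => Complex.abs z < 1)).filter
      (fun z => dist z 1 < ε)) = 1 := by
    have hcomm : (m₁.filter (fun z => Complex.abs z < 1)).filter (fun z => dist z 1 < ε)
        = (m₁.filter (fun z => dist z 1 < ε)).filter (fun z => Complex.abs z < 1) := by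
      rw [Multiset.filter_filter, Multiset.filter_filter]
      exact Multiset.filter_congr (fun x _ => and_comm)
    rw [hcomm, hpair]
    rw [show ({((xm:ℝ):ℂ), ((xp:ℝ):ℂ)} : Multiset ℂ)
      = ((xm:ℝ):ℂ) ::ₘ {((xp:ℝ):ℂ)} by rfl]
    rw [Multiset.filter_cons, Multiset.filter_singleton, if_pos habsm2, if_neg habsp2]
    simp
  have hterm2 : Multiset.card ((m₁.filter (fun z => Complex.abs z < 1)).filter
      (fun z => ¬ dist z 1 < ε)) =
      Multiset.card (m₂.filter (fun z => Complex.abs z < 1)) := by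
    rw [Multiset.filter_filter]
    refine card_filter_eq_of_rel' hrel (fun a b _ hb hab => ?_)
    have habsab : |Complex.abs a - Complex.abs b| ≤ Complex.abs (a - b) :=
      Complex.abs.abs_abv_sub_le_abv_sub a b
    rw [show Complex.abs (a - b) = dist a b from (Complex.dist_eq a b).symm] at habsab
    by_cases hb1 : b = 1
    · subst hb1
      simp only [map_one]
      constructor
      · rintro ⟨hnd, -⟩
        exact absurd hab hnd
      · intro h
        exact absurd h (by norm_num)
    · obtain ⟨hm1, hm2⟩ := hmargin b hb hb1
      have hd1 : dist b (1:ℂ) = Complex.abs (b - 1) := Complex.dist_eq _ _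
      constructor
      · rintro ⟨-, habs⟩
        by_contra hbQ
        push_neg at hbQ
        have hblt : δ ≤ Complex.abs b - 1 := by
          rcases abs_cases (Complex.abs b - 1) with ⟨he, _⟩ | ⟨he, hneg⟩
          · rw [he] at hm2; exact hm2
          · linarith
        rcases abs_cases (Complex.abs a - Complex.abs b) with ⟨he, _⟩ | ⟨he, _⟩ <;> linarith
      · intro hbQ
        have hblt : δ ≤ 1 - Complex.abs b := by
          rcases abs_cases (Complex.abs b - 1) with ⟨he, _⟩ | ⟨he, _⟩ <;> linarith [hm2]
        constructor
        · intro hd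
          have htri : dist b (1:ℂ) ≤ dist b a + dist a 1 := dist_triangle _ _ _
          rw [dist_comm b a] at htri
          linarith
        · rcases abs_cases (Complex.abs a - Complex.abs b) with ⟨he, _⟩ | ⟨he, _⟩ <;> linarith
  have hNc : Multiset.card (m₁.filter (fun z => Complex.abs z < 1)) = t := N_const hs ht hc0 hclt
  rw [hsplit, hterm1, hterm2] at hNc
  omega

end DRP
namespace DRP
end DRP

open Polynomial DRP

/-- If `a` is a double root of the trinomial `f = z^(s+t) + p z^t + q`
(`gcd(s,t) = 1`, `p, q ≠ 0`), then (i) `|a|^(s+t) = |q| t/s` and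
`|a|^s = |p| t/(s+t)`, (ii) `|p| = |q|^(s/(s+t)) ((t/s)^(s/(s+t)) + (s/t)^(t/(s+t)))`,
and (iii) exactly `t - 1` roots of `f` (with multiplicity) have norm strictly
smaller than `|a|`. -/
theorem double_root_properties (s t : ℕ) (hs : 0 < s) (ht : 0 < t)
    (hst : Nat.Coprime s t) (p q : ℂ) (hp : p ≠ 0) (hq : q ≠ 0) (a : ℂ)
    (ha : (X ^ (s + t) + C p * X ^ t + C q : Polynomial ℂ).eval a = 0)
    (ha' : (derivative (X ^ (s + t) + C p * X ^ t + C q : Polynomial ℂ)).eval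
      a = 0) :
    (‖a‖ ^ (s + t) = ‖q‖ * t / s ∧
      ‖a‖ ^ s = ‖p‖ * t / (s + t)) ∧
    ‖p‖ = ‖q‖ ^ ((s : ℝ) / (s + t)) *
      (((t : ℝ) / s) ^ ((s : ℝ) / (s + t)) +
        ((s : ℝ) / t) ^ ((t : ℝ) / (s + t))) ∧
    Multiset.card
      (((X ^ (s + t) + C p * X ^ t + C q : Polynomial ℂ)).roots.filter
        (fun z => ‖z‖ < ‖a‖)) = t - 1 := by
  show (Complex.abs a ^ (s + t) = Complex.abs q * t / s ∧
      Complex.abs a ^ s = Complex.abs p * t / (s + t)) ∧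
    Complex.abs p = Complex.abs q ^ ((s : ℝ) / (s + t)) *
      (((t : ℝ) / s) ^ ((s : ℝ) / (s + t)) +
        ((s : ℝ) / t) ^ ((t : ℝ) / (s + t))) ∧
    Multiset.card
      (((X ^ (s + t) + C p * X ^ t + C q : Polynomial ℂ)).roots.filter
        (fun z => Complex.abs z < Complex.abs a)) = t - 1
  have htR : (0:ℝ) < t := by exact_mod_cast ht
  have hsR : (0:ℝ) < s := by exact_mod_cast hs
  have htC : (t : ℂ) ≠ 0 := Nat.cast_ne_zero.mpr ht.ne'
  have hsC : (s : ℂ) ≠ 0 := Nat.cast_ne_zero.mpr hs.ne'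
  -- a ≠ 0
  have haz : a ≠ 0 := by
    intro h
    rw [h] at ha
    simp only [eval_add, eval_mul, eval_pow, eval_X, eval_C,
      zero_pow (by omega : s + t ≠ 0), zero_pow ht.ne', mul_zero, zero_add] at ha
    exact hq ha
  -- clean evals
  simp only [eval_add, eval_mul, eval_pow, eval_X, eval_C] at ha
  simp only [derivative_add, derivative_X_pow, derivative_C_mul, derivative_C,
    derivative_mul, derivative_pow, derivative_X] at ha'
  simp only [eval_add, eval_mul, eval_pow, eval_X, eval_C, eval_one, eval_zero,
    zero_mul, mul_one, one_mul, add_zero, zero_add] at ha'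
  -- ha' : ↑(s+t) * a^(s+t-1) + p * (↑t * a^(t-1)) = 0
  have hsp : a ^ (s + t - 1) = a ^ s * a ^ (t - 1) := by
    rw [← pow_add]
    congr 1
    omega
  have hfac : (((s + t : ℕ) : ℂ) * a ^ s + p * t) * a ^ (t - 1) = 0 := by
    linear_combination ha' - ((s + t : ℕ) : ℂ) * hsp
  have hlin : ((s + t : ℕ) : ℂ) * a ^ s + p * t = 0 :=
    (mul_eq_zero.mp hfac).resolve_right (pow_ne_zero _ haz)
  have hlin2 : ((s:ℂ) + t) * a ^ s + p * t = 0 := by push_cast at hlin; exact hlin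
  have hp_eq : p = -(((s : ℂ) + t) / t) * a ^ s := by
    have h2 : p = (-(((s:ℂ) + t) * a ^ s)) / t := by
      rw [eq_div_iff htC]
      linear_combination hlin2
    rw [h2]
    ring
  have hpow : a ^ (s + t) = a ^ s * a ^ t := pow_add a s t
  have hq_eq : q = ((s : ℂ) / t) * a ^ (s + t) := by
    rw [div_mul_eq_mul_div, eq_div_iff htC]
    linear_combination (t:ℂ) * ha - a ^ t * hlin2 - ((s:ℂ) + t) * hpow
  -- absolute values
  have hApos : 0 < Complex.abs a := Complex.abs.pos haz
  have hQpos : 0 < Complex.abs q := Complex.abs.pos hq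
  have hBabs : Complex.abs (((s : ℂ) + t) / t) = ((s : ℝ) + t) / t := by
    have h' : (((s : ℂ) + t) / t) = ((((s:ℝ) + t) / t : ℝ) : ℂ) := by push_cast; ring
    rw [h', Complex.abs_ofReal, abs_of_nonneg (by positivity)]
  have hSabs : Complex.abs ((s : ℂ) / t) = (s : ℝ) / t := by
    have h' : ((s : ℂ) / t) = (((s:ℝ) / t : ℝ) : ℂ) := by push_cast; ring
    rw [h', Complex.abs_ofReal, abs_of_nonneg (by positivity)]
  have habs_p : Complex.abs p = (((s:ℝ) + t) / t) * Complex.abs a ^ s := by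
    rw [hp_eq, neg_mul, AbsoluteValue.map_neg, map_mul, map_pow, hBabs]
  have habs_q : Complex.abs q = ((s:ℝ) / t) * Complex.abs a ^ (s + t) := by
    rw [hq_eq, map_mul, map_pow, hSabs]
  have hi1 : Complex.abs a ^ (s + t) = Complex.abs q * t / s := by
    rw [habs_q]
    field_simp
  have hi2 : Complex.abs a ^ s = Complex.abs p * t / (s + t) := by
    rw [habs_p]
    field_simp
  refine ⟨⟨hi1, hi2⟩, ?_, ?_⟩
  · -- part (ii)
    set A := Complex.abs a with hA
    set Q := Complex.abs q with hQ
    set σ : ℝ := (s : ℝ) / ((s:ℝ) + t) with hσdef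
    have hnpos : (0:ℝ) < (s:ℝ) + t := by linarith
    have hAn : A ^ (((s:ℝ) + t)) = Q * t / s := by
      rw [show ((s:ℝ) + t) = ((s + t : ℕ) : ℝ) by push_cast; ring, Real.rpow_natCast]
      exact hi1
    have hAs : (A : ℝ) ^ (s : ℕ) = (Q * t / s) ^ σ := by
      have h1 : ((s:ℝ) + t) * σ = ((s : ℕ) : ℝ) := by rw [hσdef]; field_simp
      calc (A : ℝ) ^ (s : ℕ) = A ^ (((s:ℕ)):ℝ) := (Real.rpow_natCast A s).symm
      _ = A ^ (((s:ℝ) + t) * σ) := by rw [h1]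
      _ = (A ^ ((s:ℝ) + t)) ^ σ := Real.rpow_mul hApos.le _ _
      _ = (Q * t / s) ^ σ := by rw [hAn]
    have htspos : (0:ℝ) < (t:ℝ)/s := by positivity
    have hstpos : (0:ℝ) < (s:ℝ)/t := by positivity
    have hsplitQ : (Q * t / s) ^ σ = Q ^ σ * ((t:ℝ)/s) ^ σ := by
      rw [show Q * t / s = Q * ((t:ℝ)/s) by ring, Real.mul_rpow hQpos.le htspos.le]
    have hτ : (t:ℝ)/((s:ℝ) + t) = 1 - σ := by rw [hσdef]; field_simp; ring
    have hkey : (((s:ℝ) + t)/t) * ((t:ℝ)/s) ^ σ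
        = ((t:ℝ)/s) ^ σ + ((s:ℝ)/t) ^ ((t:ℝ)/((s:ℝ) + t)) := by
      rw [hτ]
      have h2 : ((s:ℝ)/t) ^ (1 - σ) = ((s:ℝ)/t) * ((t:ℝ)/s) ^ σ := by
        rw [Real.rpow_sub hstpos, Real.rpow_one]
        rw [show ((t:ℝ)/s) = ((s:ℝ)/t)⁻¹ by rw [inv_div], Real.inv_rpow hstpos.le]
        rw [div_eq_mul_inv]
      rw [h2]
      have h3 : ((s:ℝ) + t)/t = 1 + (s:ℝ)/t := by field_simp; ring
      rw [h3]
      ring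
    rw [habs_p, hAs, hsplitQ, ← hkey]
    ring
  · -- part (iii)
    set c' : ℝ := (s:ℝ)/t with hc'
    have hcC : ((c' : ℝ) : ℂ) = (s:ℂ)/t := by rw [hc']; push_cast; ring
    have hfprod : (X ^ (s+t) + C p * X ^ t + C q : ℂ[X])
        = (((G s t c').roots).map (fun w => X - C (a * w))).prod := by
      apply Polynomial.funext
      intro z
      rw [eval_add, eval_add, eval_mul, eval_pow, eval_pow, eval_X, eval_C, eval_C]
      rw [eval_multiset_prod, Multiset.map_map]
      simp only [Function.comp, eval_sub, eval_X, eval_C]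
      have hGz : (G s t c').eval (z / a)
          = ((G s t c').roots.map (fun w => z/a - w)).prod := by
        conv_lhs => rw [G_eq_prod hs ht c']
        rw [eval_multiset_prod, Multiset.map_map]
        simp only [Function.comp, eval_sub, eval_X, eval_C]
      have hprod : ((G s t c').roots.map (fun w => z - a * w)).prod
          = a ^ (s+t) * ((G s t c').roots.map (fun w => z/a - w)).prod := by
        have hmc : ((G s t c').roots.map (fun w => z - a * w))
            = ((G s t c').roots.map (fun w => a * (z/a - w))) :=
          Multiset.map_congr rfl (fun w _ => by field_simp)
        rw [hmc]
        rw [show (fun w : ℂ => a * (z/a - w))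
          = (fun w : ℂ => (fun _ : ℂ => a) w * (fun w : ℂ => z/a - w) w) by rfl]
        rw [Multiset.prod_map_mul]
        congr 1
        rw [Multiset.map_const', Multiset.prod_replicate, G_card_roots hs ht]
      rw [hprod, ← hGz, G_eval, hcC, hp_eq, hq_eq]
      have h1 : a ^ (s+t) * (z/a) ^ (s+t) = z ^ (s+t) := by
        rw [div_pow, mul_comm, div_mul_cancel₀ _ (pow_ne_zero _ haz)]
      have h2 : a ^ t * (z/a) ^ t = z ^ t := by
        rw [div_pow, mul_comm, div_mul_cancel₀ _ (pow_ne_zero _ haz)]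
      linear_combination (-1 : ℂ) * h1 + (((s:ℂ)+t)/t) * a ^ s * h2
        + (((s:ℂ)+t)/t) * (z/a) ^ t * hpow
    have hroots_f : (X ^ (s+t) + C p * X ^ t + C q : ℂ[X]).roots
        = ((G s t c').roots).map (fun w => a * w) := by
      rw [hfprod,
        show (((G s t c').roots).map (fun w => X - C (a * w)))
          = ((((G s t c').roots).map (fun w => a * w)).map (fun w => X - C w)) by
            rw [Multiset.map_map]; rfl,
        roots_multiset_prod_X_sub_C]
    rw [hroots_f, Multiset.filter_map, Multiset.card_map]
    have hcong : Multiset.filter ((fun z => Complex.abs z < Complex.abs a) ∘ (fun w => a * w))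
        (G s t c').roots = Multiset.filter (fun z => Complex.abs z < 1) (G s t c').roots := by
      refine Multiset.filter_congr (fun x _ => ?_)
      simp only [Function.comp, map_mul]
      rw [show Complex.abs a * Complex.abs x < Complex.abs a
          ↔ Complex.abs a * Complex.abs x < Complex.abs a * 1 by rw [mul_one]]
      exact mul_lt_mul_iff_right₀ hApos
    rw [hcong]
    have := count_inside_cstar hs ht hst
    rw [← hc'] at this
    omega
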